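/- The relative sum of the K3-valid and LP-valid inferences equals the union of the K3-antitheorems with the LP-theorems, which equals the union of the ST-antitheorems with the ST-theorems: 𝕂₃⁺ † 𝕃ℙ⁺ = 𝕂₃ᵃ ∪ 𝕃ℙᵗ = 𝕊𝕋ᵃ ∪ 𝕊𝕋ᵗ. -/
import Mathlib


/-- Propositional formulas over a countably infinite set of variables,
with constants ⊤, ⊥, λ and connectives ¬, ∨, ∧. -/
inductive Fm : Type
  | var : ℕ → Fm
  | top : Fm
  | bot : Fm
  | lam : Fm
  | neg : Fm → Fm
  | disj : Fm → Fm → Fm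
  | conj : Fm → Fm → Fm
  deriving DecidableEq

/-- A function `v : Var → ℚ` is an SK-valuation if it takes values in {0, 1/2, 1}. -/
def SK (v : ℕ → ℚ) : Prop := ∀ p : ℕ, v p = 0 ∨ v p = 1/2 ∨ v p = 1

/-- Extension of a valuation to all formulas by the Strong Kleene scheme. -/
def eval (v : ℕ → ℚ) : Fm → ℚ
  | .var p => v p
  | .top => 1
  | .bot => 0
  | .lam => 1/2
  | .neg φ => 1 - eval v φ
  | .disj φ ψ => max (eval v φ) (eval v ψ)
  | .conj φ ψ => min (eval v φ) (eval v ψ)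

/-- An inference is a pair of finite sets of formulas. -/
abbrev Inference := Finset Fm × Finset Fm

def K3Valid (Γ Δ : Finset Fm) : Prop :=
  ∀ v : ℕ → ℚ, SK v → (∀ γ ∈ Γ, eval v γ = 1) → ∃ δ ∈ Δ, eval v δ = 1

def LPValid (Γ Δ : Finset Fm) : Prop :=
  ∀ v : ℕ → ℚ, SK v → (∀ γ ∈ Γ, eval v γ ≠ 0) → ∃ δ ∈ Δ, eval v δ ≠ 0

def STValid (Γ Δ : Finset Fm) : Prop :=
  ∀ v : ℕ → ℚ, SK v → (∀ γ ∈ Γ, eval v γ = 1) → ∃ δ ∈ Δ, eval v δ ≠ 0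

def TSValid (Γ Δ : Finset Fm) : Prop :=
  ∀ v : ℕ → ℚ, SK v → (∀ γ ∈ Γ, eval v γ ≠ 0) → ∃ δ ∈ Δ, eval v δ = 1

def K3plus : Set Inference := {I | K3Valid I.1 I.2}
def LPplus : Set Inference := {I | LPValid I.1 I.2}
def STplus : Set Inference := {I | STValid I.1 I.2}
def TSplus : Set Inference := {I | TSValid I.1 I.2}

/-- Relative product: the middle term is a single formula. -/
def RelProd (R S : Set Inference) : Set Inference :=
  {I | ∃ φ : Fm, (I.1, ({φ} : Finset Fm)) ∈ R ∧ (({φ} : Finset Fm), I.2) ∈ S}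

/-- Relative sum: for every single formula, one of the two components holds. -/
def RelSum (R S : Set Inference) : Set Inference :=
  {I | ∀ φ : Fm, (I.1, ({φ} : Finset Fm)) ∈ R ∨ (({φ} : Finset Fm), I.2) ∈ S}

theorem relSum_K3_LP_eq :
    RelSum K3plus LPplus =
      ({I : Inference | K3Valid I.1 ∅} ∪ {I : Inference | LPValid ∅ I.2}) ∧
    ({I : Inference | K3Valid I.1 ∅} ∪ {I : Inference | LPValid ∅ I.2}) =
      ({I : Inference | STValid I.1 ∅} ∪ {I : Inference | STValid ∅ I.2}) := by
  constructor
  · ext I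
    constructor
    · intro h
      rcases h Fm.lam with h1 | h2
      · left
        intro v hv hγ
        obtain ⟨δ, hδ, he⟩ := h1 v hv hγ
        rw [Finset.mem_singleton] at hδ
        subst hδ
        norm_num [eval] at he
      · right
        intro v hv _
        apply h2 v hv
        intro γ hγ
        rw [Finset.mem_singleton] at hγ
        subst hγ
        norm_num [eval]
    · intro h φ
      rcases h with ha | hb
      · left
        intro v hv hγ
        obtain ⟨δ, hδ, -⟩ := ha v hv hγ
        exact absurd hδ (Finset.notMem_empty δ)
      · right
        intro v hv _
        exact hb v hv (by simp)
  · ext I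
    simp only [Set.mem_union, Set.mem_setOf_eq, K3Valid, LPValid, STValid,
      Finset.notMem_empty, false_and, exists_false,
      IsEmpty.forall_iff, implies_true, true_implies]
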